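/- Let T be a triangulated category, F, F' : A ⟶ T two ∂-functors from an exact category A, and suppose Hom(F(X)[1], F'(Z)) = 0 for all X, Z in A. Then every natural transformation α : F ⟶ F' of the underlying additive functors is automatically a morphism of ∂-functors, i.e. for every conflation ε : X ⟶ Y ⟶ Z the square with ∂ε : F(Z) ⟶ F(X)[1], ∂'ε : F'(Z) ⟶ F'(X)[1], α_Z and α_X[1] commutes. -/

import Mathlib

open CategoryTheory CategoryTheory.Limits CategoryTheory.Pretriangulated

universe v u v' u'

/-- A Quillen exact structure on an additive category: a class of kernel–cokernel
pairs (conflations), closed under isomorphism, such that the identity of a zero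
object is a deflation, deflations are closed under composition, pullbacks of
deflations exist and are deflations, and pushouts of inflations exist and are
inflations. -/
structure ExactStructure (A : Type u) [Category.{v} A] [Preadditive A] where
  conflation : ∀ {X Y Z : A}, (X ⟶ Y) → (Y ⟶ Z) → Prop
  comp_zero : ∀ {X Y Z : A} (i : X ⟶ Y) (p : Y ⟶ Z), conflation i p → i ≫ p = 0
  isKernel : ∀ {X Y Z : A} (i : X ⟶ Y) (p : Y ⟶ Z), conflation i p →
    ∀ {W : A} (g : W ⟶ Y), g ≫ p = 0 → ∃! g' : W ⟶ X, g' ≫ i = g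
  isCokernel : ∀ {X Y Z : A} (i : X ⟶ Y) (p : Y ⟶ Z), conflation i p →
    ∀ {W : A} (g : Y ⟶ W), i ≫ g = 0 → ∃! g' : Z ⟶ W, p ≫ g' = g
  iso_closed : ∀ {X Y Z X' Y' Z' : A} (i : X ⟶ Y) (p : Y ⟶ Z)
    (i' : X' ⟶ Y') (p' : Y' ⟶ Z') (eX : X ≅ X') (eY : Y ≅ Y') (eZ : Z ≅ Z'),
    i ≫ eY.hom = eX.hom ≫ i' → p ≫ eZ.hom = eY.hom ≫ p' →
    conflation i p → conflation i' p'
  zero_deflation : ∀ Z : A, IsZero Z → ∃ (X : A) (i : X ⟶ Z), conflation i (𝟙 Z)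
  deflation_comp : ∀ {Y Z W : A} (p : Y ⟶ Z) (q : Z ⟶ W),
    (∃ (X : A) (i : X ⟶ Y), conflation i p) →
    (∃ (X : A) (i : X ⟶ Z), conflation i q) →
    ∃ (X : A) (i : X ⟶ Y), conflation i (p ≫ q)
  pullback_deflation : ∀ {Y Z Z' : A} (p : Y ⟶ Z) (f : Z' ⟶ Z),
    (∃ (X : A) (i : X ⟶ Y), conflation i p) →
    ∃ (Y' : A) (f' : Y' ⟶ Y) (p' : Y' ⟶ Z'), IsPullback f' p' p f ∧
      ∃ (X : A) (i : X ⟶ Y'), conflation i p'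
  pushout_inflation : ∀ {X Y X' : A} (i : X ⟶ Y) (f : X ⟶ X'),
    (∃ (Z : A) (p : Y ⟶ Z), conflation i p) →
    ∃ (Y' : A) (f' : Y ⟶ Y') (i' : X' ⟶ Y'), IsPushout i f f' i' ∧
      ∃ (Z : A) (p : Y' ⟶ Z), conflation i' p


/-- Let `F, F' : A ⥤ T` be two ∂-functors from an exact category `A` to a
triangulated category `T` (additive functors with functorial connecting morphisms
`del`, `del'` making the images of conflations distinguished triangles), and suppose
`Hom((F X)⟦1⟧, F' Z) = 0` for all `X, Z`. Then every natural transformation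
`α : F ⟶ F'` of the underlying additive functors is automatically a morphism of
∂-functors: for every conflation the square involving `∂ε`, `del'ε`, `α_Z` and
`α_X⟦1⟧` commutes. -/
theorem stmt_14 {A : Type u} [Category.{v} A] [Preadditive A] (E : ExactStructure A)
    {T : Type u'} [Category.{v'} T] [HasZeroObject T] [Preadditive T] [HasShift T ℤ]
    [∀ n : ℤ, (CategoryTheory.shiftFunctor T n).Additive] [Pretriangulated T]
    (F F' : A ⥤ T) [F.Additive] [F'.Additive]
    (del : ∀ {X Y Z : A} (i : X ⟶ Y) (p : Y ⟶ Z), E.conflation i p →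
      (F.obj Z ⟶ (F.obj X)⟦(1 : ℤ)⟧))
    (del' : ∀ {X Y Z : A} (i : X ⟶ Y) (p : Y ⟶ Z), E.conflation i p →
      (F'.obj Z ⟶ (F'.obj X)⟦(1 : ℤ)⟧))
    (hdel : ∀ {X Y Z : A} (i : X ⟶ Y) (p : Y ⟶ Z) (hc : E.conflation i p),
      Triangle.mk (F.map i) (F.map p) (del i p hc) ∈ distTriang T)
    (hdel' : ∀ {X Y Z : A} (i : X ⟶ Y) (p : Y ⟶ Z) (hc : E.conflation i p),
      Triangle.mk (F'.map i) (F'.map p) (del' i p hc) ∈ distTriang T)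
    (hdelnat : ∀ {X Y Z X' Y' Z' : A} (i : X ⟶ Y) (p : Y ⟶ Z) (hc : E.conflation i p)
      (i' : X' ⟶ Y') (p' : Y' ⟶ Z') (hc' : E.conflation i' p')
      (a : X ⟶ X') (b : Y ⟶ Y') (c : Z ⟶ Z'),
      i ≫ b = a ≫ i' → p ≫ c = b ≫ p' →
      del i p hc ≫ (CategoryTheory.shiftFunctor T (1 : ℤ)).map (F.map a) =
        F.map c ≫ del i' p' hc')
    (hdel'nat : ∀ {X Y Z X' Y' Z' : A} (i : X ⟶ Y) (p : Y ⟶ Z) (hc : E.conflation i p)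
      (i' : X' ⟶ Y') (p' : Y' ⟶ Z') (hc' : E.conflation i' p')
      (a : X ⟶ X') (b : Y ⟶ Y') (c : Z ⟶ Z'),
      i ≫ b = a ≫ i' → p ≫ c = b ≫ p' →
      del' i p hc ≫ (CategoryTheory.shiftFunctor T (1 : ℤ)).map (F'.map a) =
        F'.map c ≫ del' i' p' hc')
    (toda : ∀ (X Z : A) (f : (F.obj X)⟦(1 : ℤ)⟧ ⟶ F'.obj Z), f = 0)
    (α : F ⟶ F') :
    ∀ {X Y Z : A} (i : X ⟶ Y) (p : Y ⟶ Z) (hc : E.conflation i p),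
      α.app Z ≫ del' i p hc =
        del i p hc ≫ (CategoryTheory.shiftFunctor T (1 : ℤ)).map (α.app X) := by
  intro X Y Z i p hc
  obtain ⟨c, hc1, hc2⟩ := complete_distinguished_triangle_morphism
    (Triangle.mk (F.map i) (F.map p) (del i p hc))
    (Triangle.mk (F'.map i) (F'.map p) (del' i p hc))
    (hdel i p hc) (hdel' i p hc) (α.app X) (α.app Y) (α.naturality i)
  change F.obj Z ⟶ F'.obj Z at c
  change F.map p ≫ c = α.app Y ≫ F'.map p at hc1
  change del i p hc ≫ (CategoryTheory.shiftFunctor T (1 : ℤ)).map (α.app X) = c ≫ del' i p hc at hc2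
  have hz : F.map p ≫ (c - α.app Z) = 0 := by
    rw [Preadditive.comp_sub, hc1, α.naturality, sub_self]
  obtain ⟨g, hg⟩ := Triangle.yoneda_exact₃ _ (hdel i p hc) (c - α.app Z) hz
  change c - α.app Z = del i p hc ≫ g at hg
  rw [toda X Z g, comp_zero] at hg
  rw [sub_eq_zero.mp hg] at hc2
  exact hc2.symm
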